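/- Let F be a field, let β_1,...,β_k, δ, δ' be distinct elements of F, and let γ ∈ F. Consider the (k+1)×(k+1) matrix B whose first k rows are the Vandermonde rows (β_1^j,...,β_k^j, δ^j) for j = 0,...,k-1, and whose last row is (1/(β_1-δ'), ..., 1/(β_k-δ'), γ). Then (δ-δ')·det(B) / ∏_{1≤i<j≤k}(β_j-β_i) = ∏_{i=1}^k ((β_i-δ)/(β_i-δ')) + γ(δ-δ') - 1. In particular, B is singular if and only if ∏_{i=1}^k (1 + (δ'-δ)/(β_i-δ')) = 1 - γ(δ-δ'). -/

import Mathlib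

open Finset Matrix

private lemma prod_Ioi_eq_prod_ite {F : Type*} [CommMonoid F] {m : ℕ} (a : Fin m) (f : Fin m → F) :
    ∏ j ∈ Ioi a, f j = ∏ j : Fin m, if a < j then f j else 1 := by
  rw [← Finset.prod_filter]
  congr 1
  ext j
  simp

private lemma vandermonde_snoc {F : Type*} [CommRing F] {n : ℕ} (v : Fin n → F) (d : F) :
    (Matrix.vandermonde (Fin.snoc v d)).det
      = (∏ i : Fin n, ∏ j ∈ Ioi i, (v j - v i)) * ∏ i : Fin n, (d - v i) := by
  rw [Matrix.det_vandermonde, Fin.prod_univ_castSucc]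
  have hlast : (∏ j ∈ Ioi (Fin.last n),
      ((Fin.snoc v d : Fin (n+1) → F) j - (Fin.snoc v d : Fin (n+1) → F) (Fin.last n))) = 1 :=
    Finset.prod_eq_one fun j hj =>
      absurd (Finset.mem_Ioi.mp hj) (not_lt.mpr (Fin.le_last j))
  rw [hlast, mul_one]
  have h1 : ∀ i : Fin n, (∏ j ∈ Ioi i.castSucc,
      ((Fin.snoc v d : Fin (n+1) → F) j - (Fin.snoc v d : Fin (n+1) → F) i.castSucc))
      = (∏ j ∈ Ioi i, (v j - v i)) * (d - v i) := by
    intro i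
    rw [prod_Ioi_eq_prod_ite, Fin.prod_univ_castSucc, if_pos (Fin.castSucc_lt_last i)]
    simp only [Fin.castSucc_lt_castSucc_iff, Fin.snoc_castSucc, Fin.snoc_last]
    rw [prod_Ioi_eq_prod_ite]
  rw [Finset.prod_congr rfl fun i _ => h1 i, Finset.prod_mul_distrib]

theorem stmt8 {F : Type*} [Field F] (k : ℕ) (β : Fin k → F) (δ δ' γ : F)
    (hβ : Function.Injective β) (hβδ : ∀ i, β i ≠ δ) (hβδ' : ∀ i, β i ≠ δ')
    (hδδ' : δ ≠ δ')
    (B : Matrix (Fin (k + 1)) (Fin (k + 1)) F)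
    (hB : B = Matrix.of fun i j : Fin (k + 1) =>
      if hj : (j : ℕ) < k then
        (if (i : ℕ) < k then β ⟨j, hj⟩ ^ (i : ℕ) else (β ⟨j, hj⟩ - δ')⁻¹)
      else
        (if (i : ℕ) < k then δ ^ (i : ℕ) else γ)) :
    (δ - δ') * B.det / (∏ i : Fin k, ∏ j ∈ Finset.Ioi i, (β j - β i)) =
        (∏ i : Fin k, (β i - δ) / (β i - δ')) + γ * (δ - δ') - 1 ∧
      (B.det = 0 ↔
        (∏ i : Fin k, (1 + (δ' - δ) / (β i - δ'))) = 1 - γ * (δ - δ')) := by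
  classical
  -- nodes
  set x : Fin (k + 1) → F := Fin.snoc β δ with hxdef
  have hjlast : ∀ (j : Fin (k + 1)), ¬(j : ℕ) < k → j = Fin.last k := by
    intro j hj
    exact Fin.ext (Nat.le_antisymm (Nat.lt_succ_iff.mp j.isLt) (le_of_not_gt hj))
  have hx1 : ∀ (j : Fin (k + 1)) (hj : (j : ℕ) < k), x j = β ⟨j, hj⟩ := by
    intro j hj
    have hj' : j = Fin.castSucc ⟨j, hj⟩ := Fin.ext rfl
    rw [hxdef]
    conv_lhs => rw [hj']
    rw [Fin.snoc_castSucc]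
  have hx2 : ∀ (j : Fin (k + 1)), ¬(j : ℕ) < k → x j = δ := by
    intro j hj
    rw [hxdef, hjlast j hj, Fin.snoc_last]
  -- nonvanishing facts
  have hD : δ - δ' ≠ 0 := sub_ne_zero.mpr hδδ'
  have hP : (∏ i : Fin k, (β i - δ')) ≠ 0 :=
    Finset.prod_ne_zero_iff.mpr fun i _ => sub_ne_zero.mpr (hβδ' i)
  set Vβ : F := ∏ i : Fin k, ∏ j ∈ Finset.Ioi i, (β j - β i) with hVβdef
  have hV : Vβ ≠ 0 := by
    rw [hVβdef, ← Matrix.det_vandermonde]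
    exact Matrix.det_vandermonde_ne_zero_iff.mpr hβ
  -- values of B in the first k rows
  have hBpow : ∀ (i : Fin (k + 1)), (i : ℕ) < k → ∀ j, B i j = x j ^ (i : ℕ) := by
    intro i hi j
    rw [hB]
    by_cases hj : (j : ℕ) < k
    · simp only [Matrix.of_apply, dif_pos hj, if_pos hi, hx1 j hj]
    · simp only [Matrix.of_apply, dif_neg hj, if_pos hi, hx2 j hj]
  -- the special rows
  set r1 : Fin (k + 1) → F := fun j => (x j - δ')⁻¹ with hr1def
  have hc : ∀ j : Fin (k + 1), x j - δ' ≠ 0 := by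
    intro j
    by_cases hj : (j : ℕ) < k
    · rw [hx1 j hj]; exact sub_ne_zero.mpr (hβδ' _)
    · rw [hx2 j hj]; exact hD
  set e : Fin (k + 1) → F := Pi.single (Fin.last k) 1 with hedef
  have hBlast : B (Fin.last k) = r1 + (γ - (δ - δ')⁻¹) • e := by
    funext j
    by_cases hj : (j : ℕ) < k
    · have hne : j ≠ Fin.last k := by
        intro h; rw [h] at hj; simp at hj
      rw [hB]
      simp only [Matrix.of_apply, dif_pos hj, Pi.add_apply, Pi.smul_apply, hedef,
        Pi.single_apply, if_neg hne, smul_zero, add_zero, if_neg (lt_irrefl k),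
        Fin.val_last, hr1def, hx1 j hj]
    · have hj' : j = Fin.last k := hjlast j hj
      subst hj'
      rw [hB]
      simp only [Matrix.of_apply, dif_neg hj, Pi.add_apply, Pi.smul_apply, hedef,
        Pi.single_eq_same, smul_eq_mul, mul_one, if_neg (lt_irrefl k), Fin.val_last,
        hr1def, hx2 _ hj]
      field_simp
      simp only [dif_neg (lt_irrefl k)]
      ring
  -- decompose the determinant
  have hdet : B.det = (B.updateRow (Fin.last k) r1).det +
      (γ - (δ - δ')⁻¹) * (B.updateRow (Fin.last k) e).det := by
    conv_lhs => rw [← Matrix.updateRow_eq_self B (Fin.last k), hBlast]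
    rw [Matrix.det_updateRow_add, Matrix.det_updateRow_smul]
  -- the determinant of the matrix with e_last as last row
  have hB2 : (B.updateRow (Fin.last k) e).det = Vβ := by
    have hsub : ((B.updateRow (Fin.last k) e).submatrix
        (Fin.last k).succAbove (Fin.last k).succAbove) = (Matrix.vandermonde β)ᵀ := by
      ext i j
      rw [Matrix.submatrix_apply, Fin.succAbove_last,
        Matrix.updateRow_ne (Fin.castSucc_lt_last i).ne,
        hBpow i.castSucc (by simpa using i.isLt) j.castSucc]
      rw [hxdef, Fin.snoc_castSucc]
      simp [Matrix.vandermonde]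
    rw [Matrix.det_succ_row _ (Fin.last k), Finset.sum_eq_single (Fin.last k), hsub,
      Matrix.det_transpose, Matrix.det_vandermonde, Matrix.updateRow_self, hedef,
      Pi.single_eq_same]
    · rw [Fin.val_last]
      have hsign : ((-1 : F)) ^ (k + k) = 1 := Even.neg_one_pow ⟨k, rfl⟩
      rw [hsign, one_mul, one_mul, hVβdef]
    · intro j _ hj
      rw [Matrix.updateRow_self, hedef, Pi.single_eq_of_ne hj, mul_zero, zero_mul]
    · intro h; exact absurd (Finset.mem_univ _) h
  -- the polynomials
  set p : Fin (k + 1) → Polynomial F :=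
    fun i => Fin.cases 1 (fun i₀ => Polynomial.X ^ (i₀ : ℕ) * (Polynomial.X - Polynomial.C δ')) i
    with hpdef
  have hmonic : ∀ i, (p i).Monic := by
    intro i
    induction i using Fin.cases with
    | zero => rw [hpdef]; simpa using Polynomial.monic_one
    | succ i₀ =>
      rw [hpdef]
      simpa using (Polynomial.monic_X_pow (i₀ : ℕ)).mul (Polynomial.monic_X_sub_C δ')
  have hdeg : ∀ i, (p i).natDegree = (i : ℕ) := by
    intro i
    induction i using Fin.cases with
    | zero => simp [hpdef]
    | succ i₀ =>
      rw [hpdef]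
      simp only [Fin.cases_succ]
      rw [(Polynomial.monic_X_pow (i₀ : ℕ)).natDegree_mul (Polynomial.monic_X_sub_C δ')]
      simp [Fin.val_succ]
  set E : Matrix (Fin (k + 1)) (Fin (k + 1)) F :=
    Matrix.of fun i j => (p i).eval (x j) with hEdef
  have hE : E.det = Vβ * ∏ i : Fin k, (δ - β i) := by
    have h1 : E.det = Eᵀ.det := (Matrix.det_transpose E).symm
    have h2 : Eᵀ = Matrix.of fun i j => (p j).eval (x i) := by
      ext i j; rfl
    rw [h1, h2, ← Matrix.det_eval_matrixOfPolynomials_eq_det_vandermonde x p hdeg hmonic,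
      hxdef, vandermonde_snoc, hVβdef]
  -- the scaled matrix equals E with rotated rows
  have hCE : (Matrix.of fun i j => (x j - δ') * (B.updateRow (Fin.last k) r1) i j) =
      E.submatrix (finRotate (k + 1)) id := by
    ext i j
    rw [Matrix.submatrix_apply, id_eq]
    induction i using Fin.lastCases with
    | last =>
      rw [Matrix.of_apply, Matrix.updateRow_self, finRotate_last]
      have hp0 : p 0 = 1 := by simp [hpdef]
      rw [hEdef]
      simp only [Matrix.of_apply, hp0, Polynomial.eval_one]
      exact mul_inv_cancel₀ (hc j)
    | cast i₀ =>
      rw [Matrix.of_apply, Matrix.updateRow_ne (Fin.castSucc_lt_last i₀).ne,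
        hBpow i₀.castSucc (by simpa using i₀.isLt) j]
      rw [finRotate_succ_apply, Fin.coeSucc_eq_succ, hEdef]
      have hps : p i₀.succ = Polynomial.X ^ (i₀ : ℕ) * (Polynomial.X - Polynomial.C δ') := by
        simp [hpdef]
      simp only [Matrix.of_apply, hps, Polynomial.eval_mul, Polynomial.eval_pow,
        Polynomial.eval_X, Polynomial.eval_sub, Polynomial.eval_C, Fin.coe_castSucc]
      ring
  -- product of the column scalars
  have hprodc : (∏ j : Fin (k + 1), (x j - δ')) = (∏ i : Fin k, (β i - δ')) * (δ - δ') := by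
    rw [Fin.prod_univ_castSucc]
    simp [hxdef]
  -- key identity for the scaled determinant
  have hC1det : ((∏ i : Fin k, (β i - δ')) * (δ - δ')) * (B.updateRow (Fin.last k) r1).det =
      (-1 : F) ^ k * (Vβ * ∏ i : Fin k, (δ - β i)) := by
    rw [← hprodc, ← Matrix.det_mul_row (fun j => x j - δ'), hCE,
      Matrix.det_permute (finRotate (k + 1)) E, sign_finRotate, hE]
    push_cast
    ring
  have hQ : (∏ i : Fin k, (β i - δ)) = (-1 : F) ^ k * ∏ i : Fin k, (δ - β i) := by
    calc (∏ i : Fin k, (β i - δ)) = ∏ i : Fin k, (-1 * (δ - β i)) := by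
          apply Finset.prod_congr rfl; intro i _; ring
      _ = (∏ _i : Fin k, (-1 : F)) * ∏ i : Fin k, (δ - β i) := Finset.prod_mul_distrib
      _ = (-1 : F) ^ k * ∏ i : Fin k, (δ - β i) := by
          rw [Finset.prod_const, Finset.card_univ, Fintype.card_fin]
  -- the main determinant formula (no divisions)
  have hBdet : ((∏ i : Fin k, (β i - δ')) * (δ - δ')) * B.det =
      Vβ * ((∏ i : Fin k, (β i - δ)) + (γ * (δ - δ') - 1) * ∏ i : Fin k, (β i - δ')) := by
    rw [hdet, hB2, hQ]
    field_simp
    linear_combination hC1det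
  -- first goal
  have hgoal1 : (δ - δ') * B.det / Vβ =
      (∏ i : Fin k, (β i - δ) / (β i - δ')) + γ * (δ - δ') - 1 := by
    rw [Finset.prod_div_distrib]
    field_simp
    linear_combination hBdet
  refine ⟨hgoal1, ?_⟩
  -- rewrite the product in the second goal
  have hratio : (∏ i : Fin k, (1 + (δ' - δ) / (β i - δ'))) =
      (∏ i : Fin k, (β i - δ)) / (∏ i : Fin k, (β i - δ')) := by
    rw [← Finset.prod_div_distrib]
    apply Finset.prod_congr rfl
    intro i _
    have hb : β i - δ' ≠ 0 := sub_ne_zero.mpr (hβδ' i)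
    field_simp
    ring
  rw [hratio]
  constructor
  · intro h
    have h2 := hBdet
    rw [h, mul_zero] at h2
    have h3 : (∏ i : Fin k, (β i - δ)) + (γ * (δ - δ') - 1) * ∏ i : Fin k, (β i - δ') = 0 :=
      (mul_eq_zero.mp h2.symm).resolve_left hV
    field_simp
    linear_combination h3
  · intro h
    have h2 : ((∏ i : Fin k, (β i - δ')) * (δ - δ')) * B.det = 0 := by
      rw [hBdet]
      have h3 : (∏ i : Fin k, (β i - δ)) = (1 - γ * (δ - δ')) * ∏ i : Fin k, (β i - δ') := by
        field_simp at h
        linear_combination h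
      rw [h3]; ring
    rcases mul_eq_zero.mp h2 with h4 | h4
    · exact absurd h4 (mul_ne_zero hP hD)
    · exact h4
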